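/- Incremental dominance implies the Jacobian inequality: let f : ℝ^n → ℝ^n be continuously differentiable, P ∈ ℝ^{n×n} symmetric, γ ≥ 0 and ε ≥ 0, and suppose that for every x₁, x₂ ∈ ℝ^n, 2 (x₁ − x₂)ᵀ P (f(x₁) − f(x₂)) + 2γ (x₁ − x₂)ᵀ P (x₁ − x₂) + ε ‖x₁ − x₂‖² ≤ 0. Then for every x ∈ ℝ^n the linear matrix inequality ∂f(x)ᵀ P + P ∂f(x) + 2γP + εI ⪯ 0 holds, where ∂f(x) is the Jacobian of f at x. -/

import Mathlib

open Matrix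

/-- The Jacobian matrix of `f : ℝⁿ → ℝⁿ` at `x`. -/
noncomputable def jacobianMatrix (n : ℕ) (f : (Fin n → ℝ) → (Fin n → ℝ))
    (x : Fin n → ℝ) : Matrix (Fin n) (Fin n) ℝ :=
  Matrix.of fun i j => fderiv ℝ f x (Pi.single j 1) i

lemma jacobian_mulVec (n : ℕ) (f : (Fin n → ℝ) → (Fin n → ℝ)) (x v : Fin n → ℝ) :
    (jacobianMatrix n f x) *ᵥ v = fderiv ℝ f x v := by
  funext i
  have hv : v = ∑ j, v j • (Pi.single j 1 : Fin n → ℝ) := by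
    funext k
    simp [Finset.sum_apply, Pi.single_apply]
  conv_rhs => rw [hv]
  simp [jacobianMatrix, mulVec, dotProduct, map_sum, Finset.sum_apply, mul_comm]

lemma key_ineq (n : ℕ) (f : (Fin n → ℝ) → (Fin n → ℝ)) (hf : ContDiff ℝ 1 f)
    (P : Matrix (Fin n) (Fin n) ℝ) (γ ε : ℝ)
    (hinc : ∀ x₁ x₂ : Fin n → ℝ,
      2 * ((x₁ - x₂) ⬝ᵥ P.mulVec (f x₁ - f x₂)) +
        2 * γ * ((x₁ - x₂) ⬝ᵥ P.mulVec (x₁ - x₂)) +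
        ε * ((x₁ - x₂) ⬝ᵥ (x₁ - x₂)) ≤ 0)
    (x v : Fin n → ℝ) :
    2 * (v ⬝ᵥ P.mulVec (fderiv ℝ f x v)) + 2 * γ * (v ⬝ᵥ P.mulVec v) +
      ε * (v ⬝ᵥ v) ≤ 0 := by
  set g : ℝ → (Fin n → ℝ) := fun t => f (x + t • v) with hg
  have hline : HasDerivAt (fun t : ℝ => x + t • v) v 0 := by
    simpa using (((hasDerivAt_id (0:ℝ)).smul_const v).const_add x)
  have hF : HasFDerivAt f (fderiv ℝ f x) (x + (0:ℝ) • v) := by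
    simpa using (hf.differentiable one_ne_zero x).hasFDerivAt
  have hD : HasDerivAt g (fderiv ℝ f x v) 0 := hF.comp_hasDerivAt 0 hline
  have hslope : Filter.Tendsto (slope g 0) (nhdsWithin 0 {(0:ℝ)}ᶜ)
      (nhds (fderiv ℝ f x v)) := hasDerivAt_iff_tendsto_slope.mp hD
  set φ : (Fin n → ℝ) → ℝ := fun w =>
    2 * (v ⬝ᵥ P.mulVec w) + 2 * γ * (v ⬝ᵥ P.mulVec v) + ε * (v ⬝ᵥ v) with hφ
  have hcont : Continuous φ := by
    apply Continuous.add (Continuous.add ?_ continuous_const) continuous_const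
    exact continuous_const.mul (continuous_const.dotProduct
      (continuous_const.matrix_mulVec continuous_id'))
  have htend : Filter.Tendsto (fun t => φ (slope g 0 t)) (nhdsWithin 0 (Set.Ioi 0))
      (nhds (φ (fderiv ℝ f x v))) :=
    (hcont.tendsto _).comp (hslope.mono_left (nhdsWithin_mono _ (by
      intro t ht; exact ne_of_gt ht)))
  have hev : ∀ᶠ t in nhdsWithin (0:ℝ) (Set.Ioi 0), φ (slope g 0 t) ≤ 0 := by
    filter_upwards [self_mem_nhdsWithin] with t ht
    have ht0 : (0:ℝ) < t := ht
    have h1 := hinc (x + t • v) x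
    have hΔ : (x + t • v) - x = t • v := by abel
    rw [hΔ] at h1
    set a := v ⬝ᵥ P.mulVec (f (x + t • v) - f x) with ha
    set b := v ⬝ᵥ P.mulVec v with hb
    set c := v ⬝ᵥ v with hc
    have h1' : 2 * (t * a) + 2 * γ * (t^2 * b) + ε * (t^2 * c) ≤ 0 := by
      have e1 : (t • v) ⬝ᵥ P.mulVec (f (x + t • v) - f x) = t * a := by
        simp [ha, smul_dotProduct]
      have e2 : (t • v) ⬝ᵥ P.mulVec (t • v) = t^2 * b := by
        simp [hb, smul_dotProduct, mulVec_smul]; ring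
      have e3 : (t • v) ⬝ᵥ (t • v) = t^2 * c := by
        simp [hc, smul_dotProduct, dotProduct_smul]; ring
      rw [e1, e2, e3] at h1
      exact h1
    have hsl : slope g 0 t = t⁻¹ • (f (x + t • v) - f x) := by
      simp [slope, hg]
    have eφ : φ (slope g 0 t) = 2 * (t⁻¹ * a) + 2 * γ * b + ε * c := by
      rw [hsl]
      simp [hφ, mulVec_smul, dotProduct_smul, ha, hb, hc]
    rw [eφ]
    have heq : 2 * (t⁻¹ * a) + 2 * γ * b + ε * c =
        (2 * (t * a) + 2 * γ * (t^2 * b) + ε * (t^2 * c)) / t^2 := by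
      field_simp
    rw [heq]
    exact div_nonpos_of_nonpos_of_nonneg h1' (sq_nonneg t)
  exact le_of_tendsto htend hev

/-- Incremental dominance implies the Jacobian inequality: if
`2 Δxᵀ P (f(x₁) − f(x₂)) + 2γ Δxᵀ P Δx + ε‖Δx‖² ≤ 0` for every `x₁, x₂` (with
`Δx = x₁ − x₂`), then `∂f(x)ᵀP + P∂f(x) + 2γP + εI ⪯ 0` at every point `x`. -/
theorem incremental_dominance_implies_jacobian_LMI
    (n : ℕ) (f : (Fin n → ℝ) → (Fin n → ℝ)) (hf : ContDiff ℝ 1 f)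
    (P : Matrix (Fin n) (Fin n) ℝ) (hPsymm : P.IsSymm)
    (γ ε : ℝ) (hγ : 0 ≤ γ) (hε : 0 ≤ ε)
    (hinc : ∀ x₁ x₂ : Fin n → ℝ,
      2 * ((x₁ - x₂) ⬝ᵥ P.mulVec (f x₁ - f x₂)) +
        2 * γ * ((x₁ - x₂) ⬝ᵥ P.mulVec (x₁ - x₂)) +
        ε * ((x₁ - x₂) ⬝ᵥ (x₁ - x₂)) ≤ 0) :
    ∀ x : Fin n → ℝ,
      (-((jacobianMatrix n f x)ᵀ * P + P * jacobianMatrix n f x +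
          (2 * γ) • P + ε • 1)).PosSemidef := by

  intro x
  set J := jacobianMatrix n f x with hJ
  have hP : Pᵀ = P := hPsymm
  rw [posSemidef_iff_dotProduct_mulVec]
  constructor
  · show (-(Jᵀ * P + P * J + (2 * γ) • P + ε • 1))ᴴ = _
    rw [conjTranspose_eq_transpose_of_trivial, transpose_neg, neg_inj,
      transpose_add, transpose_add, transpose_add, transpose_mul, transpose_mul,
      transpose_smul, transpose_smul, transpose_transpose, transpose_one, hP]
    abel
  · intro v
    have key := key_ineq n f hf P γ ε hinc x v
    have hJv : J *ᵥ v = fderiv ℝ f x v := jacobian_mulVec n f x v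
    have hvP : v ᵥ* P = P *ᵥ v := by
      conv_lhs => rw [← hP]
      rw [vecMul_transpose]
    have e1 : v ⬝ᵥ (Jᵀ * P) *ᵥ v = v ⬝ᵥ P *ᵥ (fderiv ℝ f x v) := by
      rw [← mulVec_mulVec, dotProduct_mulVec, vecMul_transpose, hJv,
        dotProduct_comm, ← hvP, ← dotProduct_mulVec]
    have e2 : v ⬝ᵥ (P * J) *ᵥ v = v ⬝ᵥ P *ᵥ (fderiv ℝ f x v) := by
      rw [← mulVec_mulVec, hJv]
    have hsv : star v = v := by funext i; simp
    have expand : star v ⬝ᵥ (-(Jᵀ * P + P * J + (2 * γ) • P + ε • 1)) *ᵥ v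
        = -(2 * (v ⬝ᵥ P *ᵥ (fderiv ℝ f x v)) + 2 * γ * (v ⬝ᵥ P *ᵥ v) + ε * (v ⬝ᵥ v)) := by
      rw [hsv, neg_mulVec, dotProduct_neg]
      rw [add_mulVec, add_mulVec, add_mulVec, dotProduct_add, dotProduct_add, dotProduct_add,
        e1, e2, smul_mulVec, smul_mulVec, dotProduct_smul, dotProduct_smul,
        one_mulVec]
      ring_nf
    rw [expand]
    linarith
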